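/- For the planar system ẋ₁ = −λx₁ + ρx₁³ + ρx₁x₂², ẋ₂ = −λx₂ + ρx₁²x₂ + ρx₂³ with λ > 0 and ρ ∈ ℝ, the function V(x₁,x₂) = (1/(2ρ)) ln( λ / (λ − ρ(x₁²+x₂²)) ) (for ρ ≠ 0), defined on D = { x ∈ ℝ² : λ − ρ(x₁²+x₂²) > 0 }, satisfies ⟨∇V(x), f(x)⟩ = −(x₁²+x₂²) on D, with V(0)=0 and V > 0 on D ∖ {0}. -/

import Mathlib

noncomputable section

open scoped RealInnerProductSpace

private def Pj (i : Fin 2) : EuclideanSpace ℝ (Fin 2) →L[ℝ] ℝ := EuclideanSpace.proj i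

private lemma Pj_apply (i : Fin 2) (y : EuclideanSpace ℝ (Fin 2)) : Pj i y = y i := rfl

theorem log_Lyapunov_function_for_symmetric_cubic_system
    (lam ρ : ℝ) (hlam : 0 < lam) (hρ : ρ ≠ 0)
    (f : EuclideanSpace ℝ (Fin 2) → EuclideanSpace ℝ (Fin 2))
    (hf : ∀ x : EuclideanSpace ℝ (Fin 2),
      f x = (WithLp.equiv 2 (Fin 2 → ℝ)).symm
        ![-lam * x 0 + ρ * x 0 ^ 3 + ρ * x 0 * x 1 ^ 2,
          -lam * x 1 + ρ * x 0 ^ 2 * x 1 + ρ * x 1 ^ 3])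
    (D : Set (EuclideanSpace ℝ (Fin 2)))
    (hD : D = {x : EuclideanSpace ℝ (Fin 2) | 0 < lam - ρ * (x 0 ^ 2 + x 1 ^ 2)})
    (V : EuclideanSpace ℝ (Fin 2) → ℝ)
    (hV : ∀ x ∈ D, V x = (1 / (2 * ρ)) * Real.log (lam / (lam - ρ * (x 0 ^ 2 + x 1 ^ 2)))) :
    V 0 = 0 ∧
    (∀ x ∈ D, x ≠ 0 → 0 < V x) ∧
    (∀ x ∈ D, ⟪gradient V x, f x⟫ = -(x 0 ^ 2 + x 1 ^ 2)) := by
  have h0D : (0 : EuclideanSpace ℝ (Fin 2)) ∈ D := by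
    rw [hD]
    simp [hlam]
  refine ⟨?_, ?_, ?_⟩
  · rw [hV 0 h0D]
    simp [Real.log_div hlam.ne' hlam.ne', hlam.ne']
  · intro x hx hx0
    have hpos : 0 < lam - ρ * (x 0 ^ 2 + x 1 ^ 2) := by rw [hD] at hx; exact hx
    have hq : 0 < x 0 ^ 2 + x 1 ^ 2 := by
      have : x 0 ≠ 0 ∨ x 1 ≠ 0 := by
        by_contra h
        push_neg at h
        apply hx0
        ext i
        fin_cases i <;> simp [h.1, h.2]
      rcases this with h | h
      · have h2 : 0 < x 0 ^ 2 := (sq_nonneg _).lt_of_ne (Ne.symm (pow_ne_zero 2 h))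
        nlinarith [sq_nonneg (x 1)]
      · have h2 : 0 < x 1 ^ 2 := (sq_nonneg _).lt_of_ne (Ne.symm (pow_ne_zero 2 h))
        nlinarith [sq_nonneg (x 0)]
    rw [hV x hx]
    rcases hρ.lt_or_gt with hneg | hpo
    · have h1 : lam / (lam - ρ * (x 0 ^ 2 + x 1 ^ 2)) < 1 := by
        rw [div_lt_one hpos]
        nlinarith
      have hlog : Real.log (lam / (lam - ρ * (x 0 ^ 2 + x 1 ^ 2))) < 0 :=
        Real.log_neg (by positivity) h1
      have hc : 1 / (2 * ρ) < 0 := by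
        apply div_neg_of_pos_of_neg one_pos
        linarith
      exact mul_pos_of_neg_of_neg hc hlog
    · have h1 : 1 < lam / (lam - ρ * (x 0 ^ 2 + x 1 ^ 2)) := by
        rw [lt_div_iff₀ hpos]
        nlinarith
      have hlog : 0 < Real.log (lam / (lam - ρ * (x 0 ^ 2 + x 1 ^ 2))) :=
        Real.log_pos h1
      have hc : 0 < 1 / (2 * ρ) := by positivity
      exact mul_pos hc hlog
  · intro x hx
    have hpos : 0 < lam - ρ * (x 0 ^ 2 + x 1 ^ 2) := by rw [hD] at hx; exact hx
    have hne : lam - ρ * (x 0 * x 0 + x 1 * x 1) ≠ 0 := by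
      have : x 0 * x 0 + x 1 * x 1 = x 0 ^ 2 + x 1 ^ 2 := by ring
      rw [this]; exact hpos.ne'
    -- projections
    have h0 : HasFDerivAt (fun y : EuclideanSpace ℝ (Fin 2) => y 0) (Pj 0) x := by
      exact (Pj 0).hasFDerivAt
    have h1 : HasFDerivAt (fun y : EuclideanSpace ℝ (Fin 2) => y 1) (Pj 1) x := by
      exact (Pj 1).hasFDerivAt
    have hq : HasFDerivAt (fun y : EuclideanSpace ℝ (Fin 2) => y 0 * y 0 + y 1 * y 1)
        ((x 0 • (Pj 0) + x 0 • (Pj 0)) +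
         (x 1 • (Pj 1) + x 1 • (Pj 1))) x :=
      (h0.mul h0).add (h1.mul h1)
    have hφ : HasFDerivAt (fun y : EuclideanSpace ℝ (Fin 2) => lam - ρ * (y 0 * y 0 + y 1 * y 1))
        (-(ρ • ((x 0 • (Pj 0) + x 0 • (Pj 0)) +
         (x 1 • (Pj 1) + x 1 • (Pj 1))))) x :=
      (hq.const_mul ρ).const_sub lam
    have hlog := (Real.hasDerivAt_log hne).comp_hasFDerivAt x hφ
    have hW := (hlog.const_sub (Real.log lam)).const_mul (1 / (2 * ρ))
    set L := (1 / (2 * ρ)) •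
        -((lam - ρ * (x 0 * x 0 + x 1 * x 1))⁻¹ •
          -(ρ • ((x 0 • (Pj 0) + x 0 • (Pj 0)) +
         (x 1 • (Pj 1) + x 1 • (Pj 1))))) with hL
    have hVW : V =ᶠ[nhds x] (fun y : EuclideanSpace ℝ (Fin 2) =>
        (1 / (2 * ρ)) * (Real.log lam - Real.log (lam - ρ * (y 0 * y 0 + y 1 * y 1)))) := by
      have hDopen : IsOpen D := by
        rw [hD]
        have c0 : Continuous fun y : EuclideanSpace ℝ (Fin 2) => y 0 := (Pj 0).continuous
        have c1 : Continuous fun y : EuclideanSpace ℝ (Fin 2) => y 1 := (Pj 1).continuous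
        have hc : Continuous fun y : EuclideanSpace ℝ (Fin 2) => lam - ρ * (y 0 ^ 2 + y 1 ^ 2) :=
          continuous_const.sub (continuous_const.mul ((c0.pow 2).add (c1.pow 2)))
        exact isOpen_lt continuous_const hc
      filter_upwards [hDopen.mem_nhds hx] with y hy
      have hy' : 0 < lam - ρ * (y 0 ^ 2 + y 1 ^ 2) := by rw [hD] at hy; exact hy
      rw [hV y hy, Real.log_div hlam.ne' hy'.ne']
      ring_nf
    have hVd : HasFDerivAt V L x := hW.congr_of_eventuallyEq hVW
    have hG : HasGradientAt V ((InnerProductSpace.toDual ℝ (EuclideanSpace ℝ (Fin 2))).symm L) x :=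
      hasFDerivAt_iff_hasGradientAt.mp hVd
    rw [hG.gradient, InnerProductSpace.toDual_symm_apply]
    rw [hL, hf x]
    have e0 : ((WithLp.equiv 2 (Fin 2 → ℝ)).symm
        ![-lam * x 0 + ρ * x 0 ^ 3 + ρ * x 0 * x 1 ^ 2,
          -lam * x 1 + ρ * x 0 ^ 2 * x 1 + ρ * x 1 ^ 3] : EuclideanSpace ℝ (Fin 2)) 0
        = -lam * x 0 + ρ * x 0 ^ 3 + ρ * x 0 * x 1 ^ 2 := rfl
    have e1 : ((WithLp.equiv 2 (Fin 2 → ℝ)).symm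
        ![-lam * x 0 + ρ * x 0 ^ 3 + ρ * x 0 * x 1 ^ 2,
          -lam * x 1 + ρ * x 0 ^ 2 * x 1 + ρ * x 1 ^ 3] : EuclideanSpace ℝ (Fin 2)) 1
        = -lam * x 1 + ρ * x 0 ^ 2 * x 1 + ρ * x 1 ^ 3 := rfl
    simp only [ContinuousLinearMap.smul_apply, ContinuousLinearMap.neg_apply,
      ContinuousLinearMap.add_apply, Pj_apply, e0, e1, smul_eq_mul]
    have hne2 : lam - ρ * (x 0 ^ 2 + x 1 ^ 2) ≠ 0 := hpos.ne'
    field_simp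
    ring
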